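/- Let n ≥ 2 be an integer, let H_{3n} = G_{3n} □ K_3, let P_i be an equivalence class of the relation ∼ on Γ_{3n} (y ∼ z iff y − z ∈ {0, (1,…,1), (2,…,2)}), and set Q_i = P_i × V(K_3). Then the subgraph of H_{3n}^{2n} induced by Q_i is isomorphic to K_3 □ K_3. -/

import Mathlib

open SimpleGraph

/-- The `k`th power of a graph `G`: two distinct vertices are adjacent iff their
distance in `G` is (finite and) at most `k`. -/
def SimpleGraph.power {V : Type*} (G : SimpleGraph V) (k : ℕ) : SimpleGraph V where
  Adj u v := u ≠ v ∧ G.Reachable u v ∧ G.dist u v ≤ k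
  symm := by
    constructor
    rintro u v ⟨h1, h2, h3⟩
    exact ⟨h1.symm, h2.symm, by rwa [SimpleGraph.dist_comm]⟩
  loopless := by
    constructor
    rintro v ⟨h1, -, -⟩
    exact h1 rfl

/-- `G` admits a proper coloring from the lists `L`. -/
def SimpleGraph.Choosable {V : Type*} (G : SimpleGraph V) (L : V → Finset ℕ) : Prop :=
  ∃ φ : V → ℕ, (∀ v, φ v ∈ L v) ∧ ∀ u v, G.Adj u v → φ u ≠ φ v

/-- The list chromatic number of `G`: the least `t` such that `G` is colorable from
any assignment of lists of size at least `t`. -/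
noncomputable def SimpleGraph.listChromaticNumber {V : Type*} (G : SimpleGraph V) : ℕ :=
  sInf {t : ℕ | ∀ L : V → Finset ℕ, (∀ v, t ≤ (L v).card) → G.Choosable L}

/-- The lexicographic product of two graphs. -/
def SimpleGraph.lexProd {V W : Type*} (G : SimpleGraph V) (H : SimpleGraph W) :
    SimpleGraph (V × W) where
  Adj a b := G.Adj a.1 b.1 ∨ (a.1 = b.1 ∧ H.Adj a.2 b.2)
  symm := by
    constructor
    rintro a b (h | ⟨h1, h2⟩)
    · exact Or.inl h.symm
    · exact Or.inr ⟨h1.symm, h2.symm⟩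
  loopless := by
    constructor
    rintro a (h | ⟨-, h2⟩)
    · exact G.irrefl h
    · exact H.irrefl h2

/-- Vertex set `Γ_m`: the vectors in `ℤ_3^m` whose coordinates sum to zero. -/
def GammaVert (m : ℕ) : Type := {z : Fin m → ZMod 3 // ∑ i, z i = 0}

/-- The generator `x_{i,j}`: `1` in coordinate `i`, `2` in coordinate `j`, `0` elsewhere. -/
def xvec (m : ℕ) (i j : Fin m) : Fin m → ZMod 3 :=
  fun l => if l = i then 1 else if l = j then 2 else 0

/-- The Cayley graph `G_m` on `Γ_m` with connection set `X_m = {x_{i,j} : i ≠ j}`. -/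
def Gm (m : ℕ) : SimpleGraph (GammaVert m) where
  Adj y z := ∃ i j : Fin m, i ≠ j ∧ y.1 - z.1 = xvec m i j
  symm := by
    constructor
    rintro y z ⟨i, j, hij, h⟩
    refine ⟨j, i, hij.symm, ?_⟩
    have h' : z.1 - y.1 = -(y.1 - z.1) := by ring
    rw [h', h]
    funext l
    simp only [xvec, Pi.neg_apply]
    by_cases h1 : l = i
    · subst h1
      simp only [if_pos rfl, if_neg hij]
      decide
    · by_cases h2 : l = j
      · subst h2
        simp only [if_pos rfl, if_neg h1]
        decide
      · simp only [if_neg h1, if_neg h2]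
        decide
  loopless := by
    constructor
    rintro y ⟨i, j, hij, h⟩
    have := congrFun h i
    simp [xvec] at this

lemma xvec_apply {m : ℕ} {i j : Fin m} (hij : i ≠ j) (l : Fin m) :
    xvec m i j l = (if l = i then (1 : ZMod 3) else 0) + (if l = j then 2 else 0) := by
  unfold xvec
  by_cases h1 : l = i <;> by_cases h2 : l = j
  · exact absurd (h1.symm.trans h2) hij
  · subst h1; simp [hij]
  · subst h2; simp [h1]
  · simp [h1, h2]

lemma sum_xvec {m : ℕ} {i j : Fin m} (hij : i ≠ j) : ∑ l, xvec m i j l = 0 := by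
  have : ∑ l, xvec m i j l
      = (∑ l, (if l = i then (1 : ZMod 3) else 0)) + ∑ l, (if l = j then (2:ZMod 3) else 0) := by
    rw [← Finset.sum_add_distrib]
    exact Finset.sum_congr rfl fun l _ => xvec_apply hij l
  rw [this, Finset.sum_ite_eq' Finset.univ i (fun _ => (1:ZMod 3)),
    Finset.sum_ite_eq' Finset.univ j (fun _ => (2:ZMod 3))]
  simp
  decide

/-- truncated all-ones -/
def tri (n k : ℕ) : Fin (3 * n) → ZMod 3 := fun l => if l.1 < 3 * k then 1 else 0

lemma tri_step {n k : ℕ} (hk : k < n) (l : Fin (3 * n)) :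
    tri n (k + 1) l = tri n k l
      + xvec (3 * n) ⟨3 * k, by omega⟩ ⟨3 * k + 2, by omega⟩ l
      + xvec (3 * n) ⟨3 * k + 1, by omega⟩ ⟨3 * k + 2, by omega⟩ l := by
  unfold tri xvec
  have hl := l.2
  simp only [Fin.ext_iff]
  split_ifs <;> first | decide | (exfalso; omega)

lemma sum_sub_xvec {m : ℕ} (z : GammaVert m) {i j : Fin m} (hij : i ≠ j) :
    ∑ l, (z.1 - xvec m i j) l = 0 := by
  simp only [Pi.sub_apply]
  rw [Finset.sum_sub_distrib, z.2, sum_xvec hij, sub_zero]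

lemma walk_ones (n : ℕ) : ∀ (k : ℕ), k ≤ n → ∀ z z' : GammaVert (3 * n),
    (∀ l, z.1 l - z'.1 l = tri n k l) →
    ∃ w : (Gm (3 * n)).Walk z z', w.length = 2 * k := by
  intro k
  induction k with
  | zero =>
    intro _ z z' h
    obtain rfl : z = z' := by
      apply Subtype.ext; funext l
      have := h l
      simp only [tri, Nat.mul_zero, Nat.not_lt_zero, if_neg (by omega : ¬ l.1 < 0)] at this
      · exact sub_eq_zero.mp this
    exact ⟨.nil, rfl⟩
  | succ k ih =>
    intro hk z z' h
    have hkn : k < n := by omega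
    set a : Fin (3 * n) := ⟨3 * k, by omega⟩
    set b : Fin (3 * n) := ⟨3 * k + 1, by omega⟩
    set c : Fin (3 * n) := ⟨3 * k + 2, by omega⟩
    have hac : a ≠ c := by simp only [a, c, ne_eq, Fin.mk.injEq]; omega
    have hbc : b ≠ c := by simp only [b, c, ne_eq, Fin.mk.injEq]; omega
    set z1 : GammaVert (3 * n) := ⟨z.1 - xvec (3 * n) a c, sum_sub_xvec z hac⟩
    set z2 : GammaVert (3 * n) := ⟨z1.1 - xvec (3 * n) b c, sum_sub_xvec z1 hbc⟩
    have ha1 : (Gm (3 * n)).Adj z z1 := ⟨a, c, hac, by simp [z1]⟩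
    have ha2 : (Gm (3 * n)).Adj z1 z2 := ⟨b, c, hbc, by simp [z2]⟩
    have h2 : ∀ l, z2.1 l - z'.1 l = tri n k l := by
      intro l
      have hd := h l
      have ht := tri_step hkn l
      simp only [z2, z1, Pi.sub_apply]
      rw [show z.1 l - xvec (3 * n) a c l - xvec (3 * n) b c l - z'.1 l
          = (z.1 l - z'.1 l) - xvec (3 * n) a c l - xvec (3 * n) b c l by ring, hd, ht]
      ring
    obtain ⟨w, hw⟩ := ih (by omega) z2 z' h2
    exact ⟨.cons ha1 (.cons ha2 w), by simp [hw]; ring⟩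

lemma sum_of_walk {m : ℕ} {z z' : GammaVert m} (w : (Gm m).Walk z z') :
    ∃ (k : ℕ) (i j : Fin k → Fin m), k = w.length ∧ (∀ s, i s ≠ j s) ∧
      z.1 - z'.1 = ∑ s, xvec m (i s) (j s) := by
  induction w with
  | nil => exact ⟨0, Fin.elim0, Fin.elim0, rfl, fun s => s.elim0, by simp⟩
  | @cons u v x h p ih =>
    obtain ⟨i0, j0, hne0, hd⟩ := h
    obtain ⟨k, i, j, hk, hne, hsum⟩ := ih
    refine ⟨k + 1, Fin.cons i0 i, Fin.cons j0 j, by subst hk; rfl, ?_, ?_⟩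
    · intro s
      refine Fin.cases ?_ ?_ s
      · simpa using hne0
      · intro s'; simpa using hne s'
    · rw [Fin.sum_univ_succ]
      simp only [Fin.cons_zero, Fin.cons_succ]
      rw [← hd, ← hsum]
      ring

lemma min_steps {n k : ℕ} (i j : Fin k → Fin (3 * n)) (hne : ∀ s, i s ≠ j s)
    (e : ZMod 3) (he : e = 1 ∨ e = 2)
    (h : (∑ s, xvec (3 * n) (i s) (j s)) = fun _ => e) : 2 * n ≤ k := by
  set A : Fin (3 * n) → ℕ := fun l => (Finset.univ.filter fun s => i s = l).card with hA
  set B : Fin (3 * n) → ℕ := fun l => (Finset.univ.filter fun s => j s = l).card with hB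
  have hAk : ∑ l, A l = k := by
    rw [hA]
    rw [← Finset.card_eq_sum_card_fiberwise (fun s _ => Finset.mem_univ (i s))]
    simp
  have hBk : ∑ l, B l = k := by
    rw [hB]
    rw [← Finset.card_eq_sum_card_fiberwise (fun s _ => Finset.mem_univ (j s))]
    simp
  have hl : ∀ l, ((A l + 2 * B l : ℕ) : ZMod 3) = e := by
    intro l
    have h1 := congrFun h l
    rw [Finset.sum_apply] at h1
    have h2 : ∑ s, xvec (3 * n) (i s) (j s) l
        = (∑ s, (if i s = l then (1 : ZMod 3) else 0))
          + ∑ s, (if j s = l then (2 : ZMod 3) else 0) := by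
      rw [← Finset.sum_add_distrib]
      refine Finset.sum_congr rfl fun s _ => ?_
      rw [xvec_apply (hne s)]
      congr 1 <;> simp [eq_comm]
    have h3 : ∑ s, (if i s = l then (1 : ZMod 3) else 0) = (A l : ZMod 3) := by
      rw [hA]; rw [Finset.sum_boole]
    have h4 : ∑ s, (if j s = l then (2 : ZMod 3) else 0) = 2 * (B l : ZMod 3) := by
      have : ∀ s, (if j s = l then (2 : ZMod 3) else 0)
          = 2 * (if j s = l then (1:ZMod 3) else 0) := by
        intro s; split_ifs <;> ring
      rw [Finset.sum_congr rfl fun s _ => this s, ← Finset.mul_sum, Finset.sum_boole]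
    rw [h2, h3, h4] at h1
    push_cast
    rw [h1]
  have hnat : ∀ l, ∃ t, A l + 2 * B l = e.val + 3 * t :=
    fun l => (ZMod.natCast_eq_iff 3 _ e).1 (hl l)
  rcases he with rfl | rfl
  · have key : ∀ l, 2 ≤ 2 * A l + B l := by
      intro l
      obtain ⟨t, ht⟩ := hnat l
      have hv : (1 : ZMod 3).val = 1 := rfl
      rw [hv] at ht
      omega
    have hsum : ∑ _l : Fin (3 * n), 2 ≤ ∑ l, (2 * A l + B l) :=
      Finset.sum_le_sum (fun l _ => key l)
    rw [Finset.sum_add_distrib, ← Finset.mul_sum, hAk, hBk] at hsum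
    simp only [Finset.sum_const, Finset.card_univ, Fintype.card_fin, smul_eq_mul] at hsum
    omega
  · have key : ∀ l, 2 ≤ A l + 2 * B l := by
      intro l
      obtain ⟨t, ht⟩ := hnat l
      have hv : (2 : ZMod 3).val = 2 := rfl
      rw [hv] at ht
      omega
    have hsum : ∑ _l : Fin (3 * n), 2 ≤ ∑ l, (A l + 2 * B l) :=
      Finset.sum_le_sum (fun l _ => key l)
    rw [Finset.sum_add_distrib, ← Finset.mul_sum, hAk, hBk] at hsum
    simp only [Finset.sum_const, Finset.card_univ, Fintype.card_fin, smul_eq_mul] at hsum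
    omega

lemma boxProd_walk_decomp {α β : Type*} {G : SimpleGraph α} {H : SimpleGraph β}
    {x y : α × β} (w : (G.boxProd H).Walk x y) :
    ∃ (w1 : G.Walk x.1 y.1) (w2 : H.Walk x.2 y.2), w1.length + w2.length = w.length := by
  induction w with
  | nil => exact ⟨.nil, .nil, rfl⟩
  | @cons u v x h p ih =>
    obtain ⟨w1, w2, hlen⟩ := ih
    rcases (SimpleGraph.boxProd_adj.1 h) with ⟨ha, he⟩ | ⟨ha, he⟩
    · exact ⟨.cons ha w1, w2.copy he.symm rfl, by
        simp [SimpleGraph.Walk.length_copy, hlen.symm]; omega⟩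
    · exact ⟨w1.copy he.symm rfl, .cons ha w2, by
        simp [SimpleGraph.Walk.length_copy, hlen.symm]; omega⟩

lemma cd_cases (e : ZMod 3) (he : e ≠ 0) : e = 1 ∨ e = 2 := by revert he; revert e; decide

lemma adj_char (n : ℕ) (hn : 2 ≤ n) (y z z' : GammaVert (3 * n)) (t t' : Fin 3)
    (c c' : ZMod 3) (hz : ∀ l, z.1 l = y.1 l + c) (hz' : ∀ l, z'.1 l = y.1 l + c') :
    (((Gm (3 * n)).boxProd (⊤ : SimpleGraph (Fin 3))).power (2 * n)).Adj (z, t) (z', t')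
      ↔ ((c ≠ c' ∧ t = t') ∨ (c = c' ∧ t ≠ t')) := by
  have hdiff : ∀ l, z.1 l - z'.1 l = c - c' := fun l => by rw [hz l, hz' l]; ring
  have hzz' : z = z' ↔ c = c' := by
    constructor
    · intro h
      have := hdiff ⟨0, by omega⟩
      rw [h, sub_self] at this
      exact sub_eq_zero.mp this.symm
    · intro h
      exact Subtype.ext (funext fun l => by rw [hz l, hz' l, h])
  constructor
  · rintro ⟨hne, hreach, hdist⟩
    by_cases hcc : c = c'
    · right
      exact ⟨hcc, fun ht => hne (by rw [hzz'.2 hcc, ht])⟩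
    · left
      refine ⟨hcc, ?_⟩
      by_contra htt
      obtain ⟨w, hw⟩ := hreach.exists_walk_length_eq_dist
      obtain ⟨w1, w2, hlen⟩ := boxProd_walk_decomp w
      obtain ⟨k, i, j, hk, hne2, hsum⟩ := sum_of_walk w1
      have he : c - c' = 1 ∨ c - c' = 2 := cd_cases _ (sub_ne_zero.2 hcc)
      have h2n : 2 * n ≤ k := by
        refine min_steps i j hne2 (c - c') he ?_
        rw [← hsum]
        funext l
        exact hdiff l
      have hb : 1 ≤ w2.length := by
        rcases Nat.eq_zero_or_pos w2.length with h0 | hpos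
        · exact absurd (SimpleGraph.Walk.eq_of_length_eq_zero h0) htt
        · exact hpos
      omega
  · rintro (⟨hcc, rfl⟩ | ⟨hcc, htt⟩)
    · have hznz : z ≠ z' := fun h => hcc (hzz'.1 h)
      have he : c - c' = 1 ∨ c - c' = 2 := cd_cases _ (sub_ne_zero.2 hcc)
      have hW : ∃ w : (Gm (3 * n)).Walk z z', w.length ≤ 2 * n := by
        rcases he with h1 | h2
        · obtain ⟨w, hw⟩ := walk_ones n n le_rfl z z' (fun l => by
            rw [hdiff l, h1, tri, if_pos l.2])
          exact ⟨w, hw.le⟩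
        · obtain ⟨w, hw⟩ := walk_ones n n le_rfl z' z (fun l => by
            rw [tri, if_pos l.2]
            have := hdiff l
            have h3 : z'.1 l - z.1 l = -(c - c') := by rw [← this]; ring
            rw [h3, h2]; decide)
          exact ⟨w.reverse, by rw [SimpleGraph.Walk.length_reverse]; exact hw.le⟩
      obtain ⟨w, hw⟩ := hW
      refine ⟨fun h => hznz congr(($h).1),
        ⟨SimpleGraph.Walk.boxProdLeft (H := (⊤ : SimpleGraph (Fin 3))) t w⟩, ?_⟩
      refine le_trans (SimpleGraph.dist_le
        (SimpleGraph.Walk.boxProdLeft (H := (⊤ : SimpleGraph (Fin 3))) t w)) ?_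
      have hlb : (SimpleGraph.Walk.boxProdLeft (H := (⊤ : SimpleGraph (Fin 3))) t w).length
          = w.length := SimpleGraph.Walk.length_map _ w
      rw [hlb]
      exact hw
    · obtain rfl : z = z' := hzz'.2 hcc
      have hadj : ((Gm (3 * n)).boxProd (⊤ : SimpleGraph (Fin 3))).Adj (z, t) (z, t') :=
        SimpleGraph.boxProd_adj.2 (Or.inr ⟨htt, rfl⟩)
      refine ⟨fun h => htt congr(($h).2), hadj.reachable, ?_⟩
      refine le_trans (SimpleGraph.dist_le hadj.toWalk) ?_
      simp only [SimpleGraph.Walk.length_cons, SimpleGraph.Walk.length_nil]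
      omega

lemma sum_const_zmod (n : ℕ) (e : ZMod 3) : ∑ _l : Fin (3 * n), e = 0 := by
  rw [Finset.sum_const, Finset.card_univ, Fintype.card_fin, nsmul_eq_mul,
    Nat.cast_mul, ZMod.natCast_self]
  simp

def cvert (n : ℕ) (y : GammaVert (3 * n)) (c : ZMod 3) : GammaVert (3 * n) :=
  ⟨fun l => y.1 l + c, by rw [Finset.sum_add_distrib, y.2, sum_const_zmod, zero_add]⟩

lemma cvert_mem (n : ℕ) (y : GammaVert (3 * n)) (c : ZMod 3) :
    (cvert n y c).1 - y.1 = 0 ∨ (cvert n y c).1 - y.1 = (fun _ => 1 : Fin (3 * n) → ZMod 3) ∨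
      (cvert n y c).1 - y.1 = (fun _ => 2 : Fin (3 * n) → ZMod 3) := by
  have hd : (cvert n y c).1 - y.1 = fun _ => c := funext fun l => by
    simp [cvert]
  rcases (by decide : ∀ e : ZMod 3, e = 0 ∨ e = 1 ∨ e = 2) c with h | h | h
  · left; rw [hd, h]; rfl
  · right; left; rw [hd, h]
  · right; right; rw [hd, h]


/-- Let `n ≥ 2` and `H_{3n} = G_{3n} □ K_3`. For an equivalence class `P` of `∼` on
`Γ_{3n}` (the class of a vertex `y`), the subgraph of `H_{3n}^(2n)` induced by
`Q = P × V(K_3)` is isomorphic to `K_3 □ K_3`. -/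
theorem induced_subgraph_iso (n : ℕ) (hn : 2 ≤ n) (y : GammaVert (3 * n)) :
    Nonempty
      (((((Gm (3 * n)).boxProd (⊤ : SimpleGraph (Fin 3))).power (2 * n)).induce
          {p : GammaVert (3 * n) × Fin 3 |
            p.1.1 - y.1 = 0 ∨ p.1.1 - y.1 = (fun _ => 1 : Fin (3 * n) → ZMod 3) ∨
              p.1.1 - y.1 = (fun _ => 2 : Fin (3 * n) → ZMod 3)}) ≃g
        ((⊤ : SimpleGraph (Fin 3)).boxProd (⊤ : SimpleGraph (Fin 3)))) := by
  have h0 : (0:ℕ) < 3 * n := by omega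
  have hchar : ∀ z : GammaVert (3 * n),
      (z.1 - y.1 = 0 ∨ z.1 - y.1 = (fun _ => 1 : Fin (3 * n) → ZMod 3) ∨
        z.1 - y.1 = (fun _ => 2 : Fin (3 * n) → ZMod 3)) →
      ∀ l, z.1 l = y.1 l + (z.1 ⟨0, h0⟩ - y.1 ⟨0, h0⟩) := by
    intro z hz l
    rcases hz with h | h | h <;>
    · have h1 := congrFun h l
      have h2 := congrFun h (⟨0, h0⟩ : Fin (3 * n))
      simp only [Pi.sub_apply, Pi.zero_apply] at h1 h2
      linear_combination h1 - h2
  refine ⟨⟨⟨fun p => (⟨(p.1.1.1 ⟨0, h0⟩ - y.1 ⟨0, h0⟩).val, ZMod.val_lt _⟩, p.1.2),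
      fun q => ⟨(cvert n y ((q.1.1 : ℕ) : ZMod 3), q.2), cvert_mem n y _⟩, ?_, ?_⟩, ?_⟩⟩
  · intro p
    apply Subtype.ext
    apply Prod.ext
    · apply Subtype.ext
      funext l
      have hc := hchar p.1.1 p.2 l
      show y.1 l + ((p.1.1.1 ⟨0, h0⟩ - y.1 ⟨0, h0⟩).val : ZMod 3) = p.1.1.1 l
      rw [ZMod.natCast_rightInverse (p.1.1.1 ⟨0, h0⟩ - y.1 ⟨0, h0⟩)]
      exact hc.symm
    · rfl
  · intro q
    apply Prod.ext
    · apply Fin.ext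
      show ((cvert n y ((q.1.1 : ℕ) : ZMod 3)).1 ⟨0, h0⟩ - y.1 ⟨0, h0⟩).val = q.1.1
      simp only [cvert]
      rw [add_sub_cancel_left]
      exact ZMod.val_cast_of_lt q.1.2
    · rfl
  · intro a b
    have hA := adj_char n hn y a.1.1 b.1.1 a.1.2 b.1.2
      (a.1.1.1 ⟨0, h0⟩ - y.1 ⟨0, h0⟩) (b.1.1.1 ⟨0, h0⟩ - y.1 ⟨0, h0⟩)
      (hchar a.1.1 a.2) (hchar b.1.1 b.2)
    rw [SimpleGraph.boxProd_adj]
    simp only [SimpleGraph.top_adj]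
    have hv : (⟨(a.1.1.1 ⟨0, h0⟩ - y.1 ⟨0, h0⟩).val, ZMod.val_lt _⟩ : Fin 3)
        = ⟨(b.1.1.1 ⟨0, h0⟩ - y.1 ⟨0, h0⟩).val, ZMod.val_lt _⟩ ↔
        a.1.1.1 ⟨0, h0⟩ - y.1 ⟨0, h0⟩ = b.1.1.1 ⟨0, h0⟩ - y.1 ⟨0, h0⟩ := by
      constructor
      · intro h
        exact ZMod.val_injective 3 (congrArg Fin.val h)
      · intro h
        apply Fin.ext
        simp [h]
    constructor
    · intro h
      exact hA.mpr (by tauto)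
    · intro h
      have := hA.mp h
      tauto
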